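/- Let K be a positive even integer and let θ be a real number with 0 ≤ θ < 2π. Let θ' = θ + π if θ < π, and θ' = θ − π otherwise (so θ' is (θ + π) reduced modulo 2π into [0, 2π)). Then ⌊K·θ'/(2π)⌋ = (⌊K·θ/(2π)⌋ + K/2) mod K. -/

import Mathlib

/-- For a node with `K` equal sectors (with `K` a positive even integer), the
sector index of the antipodal direction `θ' = (θ + π) mod 2π` of a direction `θ ∈ [0, 2π)` is
`(⌊K·θ/(2π)⌋ + K/2) mod K`. -/
theorem antipodal_sector_index
    (K : ℕ) (hK : 0 < K) (hKeven : Even K)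
    (θ : ℝ) (hθ₀ : 0 ≤ θ) (hθ₁ : θ < 2 * Real.pi) :
    ⌊(K : ℝ) * (if θ < Real.pi then θ + Real.pi else θ - Real.pi) / (2 * Real.pi)⌋
      = (⌊(K : ℝ) * θ / (2 * Real.pi)⌋ + ((K / 2 : ℕ) : ℤ)) % (K : ℤ) := by
  have hπ : (0:ℝ) < Real.pi := Real.pi_pos
  obtain ⟨r, hr⟩ := hKeven
  have hK2 : K / 2 = r := by omega
  set m : ℤ := ((K / 2 : ℕ) : ℤ) with hm
  have h2m : 2 * m = (K : ℤ) := by rw [hm, hK2]; subst hr; push_cast; ring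
  have hmr : ((m : ℤ) : ℝ) = (K : ℝ) / 2 := by
    have h := congrArg (fun z : ℤ => (z : ℝ)) h2m
    push_cast at h
    linarith
  set x : ℝ := (K : ℝ) * θ / (2 * Real.pi) with hx
  have hx0 : (0:ℤ) ≤ ⌊x⌋ := by
    apply Int.floor_nonneg.mpr
    positivity
  have hxK : ⌊x⌋ < (K : ℤ) := by
    apply Int.floor_lt.mpr
    push_cast
    rw [hx, div_lt_iff₀ (by positivity)]
    have hKpos : (0:ℝ) < (K:ℝ) := by exact_mod_cast hK
    nlinarith
  by_cases hθ : θ < Real.pi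
  · rw [if_pos hθ]
    have heq : (K : ℝ) * (θ + Real.pi) / (2 * Real.pi) = x + (m : ℝ) := by
      rw [hmr, hx]
      field_simp
    rw [heq, Int.floor_add_intCast]
    have h1 : ⌊x⌋ < m := by
      apply Int.floor_lt.mpr
      rw [hmr, hx, div_lt_iff₀ (by positivity)]
      have hKpos : (0:ℝ) < (K:ℝ) := by exact_mod_cast hK
      nlinarith
    rw [Int.emod_eq_of_lt (by omega) (by omega)]
  · rw [if_neg hθ]
    push_neg at hθ
    have heq : (K : ℝ) * (θ - Real.pi) / (2 * Real.pi) = x - (m : ℝ) := by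
      rw [hmr, hx]
      field_simp
    rw [heq, Int.floor_sub_intCast]
    have h1 : m ≤ ⌊x⌋ := by
      apply Int.le_floor.mpr
      rw [hmr, hx, le_div_iff₀ (by positivity)]
      have hKpos : (0:ℝ) < (K:ℝ) := by exact_mod_cast hK
      nlinarith
    have : ⌊x⌋ + m = (⌊x⌋ - m) + 1 * (K : ℤ) := by omega
    rw [this, Int.add_mul_emod_self_right, Int.emod_eq_of_lt (by omega) (by omega)]
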